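/- For every odd positive integer a, ∑_{1 ≤ j ≤ a, j odd} ⌊log₂(a/j)⌋ = ∑_{1 ≤ j ≤ a, j odd} (log₂(a/j) − {log₂(a/j)}), and consequently log 2 · (a−1)/2 = ∑_{1 ≤ j ≤ a, j odd} log(a/j) − log 2 · ∑_{1 ≤ j ≤ a, j odd} {log₂(a/j)}. -/

import Mathlib

open Finset

private lemma fiber_card (a j : ℕ) (ha : 0 < a) (hj1 : 1 ≤ j) (hja : j ≤ a)
    (hjodd : Odd j) :
    (((Icc 1 a).filter (fun m => Even m)).filter
      (fun m => ordCompl[2] m = j)).card = Nat.log 2 (a / j) := by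
  have hj0 : 0 < j := hj1
  have hdiv0 : a / j ≠ 0 := (Nat.div_pos hja hj0).ne'
  have hnd : ¬ (2 ∣ j) := by
    rcases hjodd with ⟨m, rfl⟩; omega
  rw [show Nat.log 2 (a / j) = (Icc 1 (Nat.log 2 (a / j))).card by rw [Nat.card_Icc]; omega]
  symm
  apply Finset.card_nbij (fun k => 2 ^ k * j)
  · intro k hk
    simp only [mem_coe, mem_Icc] at hk
    have hle : 2 ^ k * j ≤ a := by
      rw [← Nat.le_div_iff_mul_le hj0]
      exact (Nat.le_log_iff_pow_le one_lt_two hdiv0).mp hk.2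
    simp only [mem_coe, mem_filter, mem_Icc]
    refine ⟨⟨⟨Nat.one_le_iff_ne_zero.mpr (by positivity), hle⟩, ?_⟩, ?_⟩
    · obtain ⟨c, hc⟩ : 2 ∣ 2 ^ k * j := Dvd.dvd.mul_right (dvd_pow_self 2 (by omega : k ≠ 0)) j
      exact ⟨c, by omega⟩
    · have hf : (2 ^ k * j).factorization 2 = k := by
        rw [Nat.factorization_mul (by positivity) hj0.ne',
          Nat.Prime.factorization_pow Nat.prime_two]
        simp [Nat.factorization_eq_zero_of_not_dvd hnd]
      rw [hf, Nat.mul_div_cancel_left j (by positivity)]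
  · intro k₁ h₁ k₂ h₂ h
    have := Nat.eq_of_mul_eq_mul_right hj0 h
    exact Nat.pow_right_injective le_rfl this
  · intro m hm
    simp only [coe_filter, Set.mem_setOf_eq, mem_Icc, mem_filter] at hm
    obtain ⟨⟨⟨hm1, hma⟩, hme⟩, hmc⟩ := hm
    set k := m.factorization 2 with hk
    have hm0 : m ≠ 0 := by omega
    have hmdvd : 2 ∣ m := hme.two_dvd
    have hk1 : 1 ≤ k := (Nat.Prime.factorization_pos_of_dvd Nat.prime_two hm0 hmdvd)
    have hmeq : 2 ^ k * j = m := by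
      rw [← hmc]; exact Nat.ordProj_mul_ordCompl_eq_self m 2
    have hkL : k ≤ Nat.log 2 (a / j) := by
      rw [Nat.le_log_iff_pow_le one_lt_two hdiv0, Nat.le_div_iff_mul_le hj0, hmeq]
      exact hma
    exact ⟨k, by simp [mem_Icc, hk1, hkL], hmeq⟩
private lemma evens_card (a : ℕ) (hodd : Odd a) :
    ((Icc 1 a).filter (fun m => Even m)).card = (a - 1) / 2 := by
  obtain ⟨t, rfl⟩ := hodd
  rw [show (2 * t + 1 - 1) / 2 = (Icc 1 t).card by rw [Nat.card_Icc]; omega]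
  symm
  apply Finset.card_nbij (fun k => 2 * k)
  · intro k hk
    simp only [mem_coe, mem_Icc] at hk
    simp only [mem_coe, mem_filter, mem_Icc]
    exact ⟨⟨by omega, by omega⟩, ⟨k, by omega⟩⟩
  · intro k₁ _ k₂ _ h; simp only at h; omega
  · intro m hm
    simp only [coe_filter, Set.mem_setOf_eq, mem_Icc] at hm
    obtain ⟨⟨h1, h2⟩, c, hc⟩ := hm
    exact ⟨c, by simp [mem_Icc]; omega, by simp only; omega⟩

private lemma key_sum (a : ℕ) (ha : 0 < a) (hodd : Odd a) :
    ∑ j ∈ (Icc 1 a).filter (fun j => Odd j), Nat.log 2 (a / j) = (a - 1) / 2 := by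
  rw [← evens_card a hodd]
  rw [Finset.card_eq_sum_card_fiberwise
    (f := fun m => ordCompl[2] m) (t := (Icc 1 a).filter (fun j => Odd j)) ?_]
  · apply Finset.sum_congr rfl
    intro j hj
    simp only [mem_filter, mem_Icc] at hj
    exact (fiber_card a j ha hj.1.1 hj.1.2 hj.2).symm
  · intro m hm
    simp only [mem_coe, mem_filter, mem_Icc] at hm ⊢
    obtain ⟨⟨h1, h2⟩, hme⟩ := hm
    have hm0 : m ≠ 0 := by omega
    have hnd := Nat.not_dvd_ordCompl Nat.prime_two hm0
    refine ⟨⟨Nat.ordCompl_pos 2 hm0, (Nat.ordCompl_le m 2).trans h2⟩, ?_⟩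
    rw [Nat.odd_iff]
    omega
private lemma bridge (a j : ℕ) (hj1 : 1 ≤ j) (hja : j ≤ a) :
    (⌊Real.log ((a : ℝ) / (j : ℝ)) / Real.log 2⌋ : ℝ) = (Nat.log 2 (a / j) : ℝ) := by
  have hj0 : (0:ℝ) < j := by exact_mod_cast hj1
  have hr1 : (1:ℝ) ≤ (a : ℝ) / (j : ℝ) := by
    rw [le_div_iff₀ hj0]
    simpa using (Nat.cast_le (α := ℝ)).mpr hja
  have : Real.log ((a : ℝ) / (j : ℝ)) / Real.log 2 = Real.logb ((2:ℕ):ℝ) ((a : ℝ) / (j : ℝ)) := by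
    norm_num [Real.logb]
  rw [this, Real.floor_logb_natCast (by linarith : (0:ℝ) ≤ (a : ℝ) / (j : ℝ)),
    Int.log_of_one_le_right 2 hr1, Nat.floor_div_natCast, Nat.floor_natCast]
  norm_num

theorem stmt_7 (a : ℕ) (ha : 0 < a) (hodd : Odd a) :
    ((∑ j ∈ (Finset.Icc 1 a).filter (fun j => Odd j),
        (⌊Real.log ((a : ℝ) / (j : ℝ)) / Real.log 2⌋ : ℝ)) =
      ∑ j ∈ (Finset.Icc 1 a).filter (fun j => Odd j),
        (Real.log ((a : ℝ) / (j : ℝ)) / Real.log 2 -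
          Int.fract (Real.log ((a : ℝ) / (j : ℝ)) / Real.log 2))) ∧
    Real.log 2 * (((a : ℝ) - 1) / 2) =
      (∑ j ∈ (Finset.Icc 1 a).filter (fun j => Odd j), Real.log ((a : ℝ) / (j : ℝ))) -
        Real.log 2 * ∑ j ∈ (Finset.Icc 1 a).filter (fun j => Odd j),
          Int.fract (Real.log ((a : ℝ) / (j : ℝ)) / Real.log 2) := by
  have hlog2 : Real.log 2 ≠ 0 := (Real.log_pos (by norm_num)).ne'
  set S := (Finset.Icc 1 a).filter (fun j => Odd j) with hS
  have h1 : (∑ j ∈ S, (⌊Real.log ((a : ℝ) / (j : ℝ)) / Real.log 2⌋ : ℝ)) =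
      ∑ j ∈ S, (Real.log ((a : ℝ) / (j : ℝ)) / Real.log 2 -
        Int.fract (Real.log ((a : ℝ) / (j : ℝ)) / Real.log 2)) :=
    Finset.sum_congr rfl fun j _ => (Int.self_sub_fract _).symm
  refine ⟨h1, ?_⟩
  have hsumfloor : (∑ j ∈ S, (⌊Real.log ((a : ℝ) / (j : ℝ)) / Real.log 2⌋ : ℝ)) =
      (((a : ℝ) - 1) / 2) := by
    have : (∑ j ∈ S, (⌊Real.log ((a : ℝ) / (j : ℝ)) / Real.log 2⌋ : ℝ)) =
        ((∑ j ∈ S, Nat.log 2 (a / j) : ℕ) : ℝ) := by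
      push_cast
      refine Finset.sum_congr rfl fun j hj => ?_
      simp only [hS, mem_filter, mem_Icc] at hj
      exact bridge a j hj.1.1 hj.1.2
    rw [this, key_sum a ha hodd]
    obtain ⟨t, rfl⟩ := hodd
    rw [show (2 * t + 1 - 1) / 2 = t by omega]
    push_cast
    ring
  rw [Finset.sum_sub_distrib] at h1
  have h2 : (∑ j ∈ S, Real.log ((a : ℝ) / (j : ℝ)) / Real.log 2) =
      (∑ j ∈ S, Real.log ((a : ℝ) / (j : ℝ))) / Real.log 2 := by
    rw [Finset.sum_div]
  rw [← hsumfloor, h1, h2, mul_sub, mul_div_cancel₀ _ hlog2]
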